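/- Under the standing assumptions, let c be a codeword of C_{n−1}(n,q) with wt(c) ≤ W(n,q). If the stabilized partition ℍ_c^∞ of H_c has exactly two parts (i.e. |ℍ_c^∞| = 2), then c is not a minimal codeword. -/

import Mathlib

open Module

noncomputable section

/-- `pgTheta q m = 1 + q + … + q^m` for `m ≥ 0`, and `0` for `m < 0`. -/
def pgTheta (q : ℕ) (m : ℤ) : ℤ := ∑ i ∈ Finset.range (m + 1).toNat, (q : ℤ) ^ i

/-- `q^j`, truncated to `0` for negative exponents `j`. -/
def pgQpow (q : ℕ) (j : ℤ) : ℤ := if j < 0 then 0 else (q : ℤ) ^ j.toNat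

/-- `Δ_{i,q}` where `q = p^h`: `⌊√q / 2^(i-2)⌋` if `h > 2`, and `⌊p / 2^i⌋` if `h = 2`. -/
noncomputable def pgDelta (p h : ℕ) (i : ℤ) : ℤ :=
  if 2 < h then ⌊Real.sqrt ((p : ℝ) ^ h) / (2 : ℝ) ^ (i - 2)⌋
  else ⌊(p : ℝ) / (2 : ℝ) ^ i⌋

/-- `W(i,q) = (Δ_{i,q} - 1)·θ_{i-1}`. -/
noncomputable def pgW (p h : ℕ) (i : ℤ) : ℤ := (pgDelta p h i - 1) * pgTheta (p ^ h) (i - 1)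

/-- `U(n,i,q) = q^i − (Δ_{n,q} − 2)·⌊q^(i−1)⌋ − (i−2)·((q−1)·Δ_{n,q} + 1)·⌊q^(i−3)⌋ + θ_{i−3}`. -/
noncomputable def pgU (p h n : ℕ) (i : ℤ) : ℤ :=
  pgQpow (p ^ h) i - (pgDelta p h n - 2) * pgQpow (p ^ h) (i - 1)
    - (i - 2) * ((((p ^ h : ℕ) : ℤ) - 1) * pgDelta p h n + 1) * pgQpow (p ^ h) (i - 3)
    + pgTheta (p ^ h) (i - 3)

/-- `⌈w / θ_m⌉` as a natural number. -/
noncomputable def pgCeil (q w : ℕ) (m : ℤ) : ℕ := (⌈(w : ℚ) / ((pgTheta q m : ℤ) : ℚ)⌉).toNat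
open scoped Classical

/-- A point of `PG(n,q)`: a 1-dimensional subspace of `F^(n+1)`. -/
abbrev PGPoint (F : Type) [Field F] (n : ℕ) :=
  {P : Submodule F (Fin (n + 1) → F) // finrank F P = 1}

/-- The indicator function of a subspace `κ`, with values in `ZMod p`. -/
noncomputable def pgInd (p : ℕ) (F : Type) [Field F] (n : ℕ)
    (κ : Submodule F (Fin (n + 1) → F)) : PGPoint F n → ZMod p :=
  fun P => if P.1 ≤ κ then 1 else 0

/-- The code `C_{n-1}(n,q)`: the `ZMod p`-span of the indicator functions of all
hyperplanes (i.e. `n`-dimensional subspaces of `F^(n+1)`). -/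
noncomputable def pgCode (p : ℕ) (F : Type) [Field F] (n : ℕ) :
    Submodule (ZMod p) (PGPoint F n → ZMod p) :=
  Submodule.span (ZMod p)
    {f | ∃ H : Submodule F (Fin (n + 1) → F), finrank F H = n ∧ f = pgInd p F n H}

/-- The weight of a codeword: the number of points where it is nonzero. -/
noncomputable def pgWt (p : ℕ) (F : Type) [Field F] (n : ℕ)
    (c : PGPoint F n → ZMod p) : ℕ :=
  Set.ncard {P : PGPoint F n | c P ≠ 0}

/-- The number of points of `supp c` lying in the subspace `κ`. -/
noncomputable def pgSecant (p : ℕ) (F : Type) [Field F] (n : ℕ)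
    (c : PGPoint F n → ZMod p) (κ : Submodule F (Fin (n + 1) → F)) : ℕ :=
  Set.ncard {P : PGPoint F n | c P ≠ 0 ∧ P.1 ≤ κ}

/-- A codeword `c` is minimal if every codeword whose support is contained in the
support of `c` is a scalar multiple of `c`. -/
noncomputable def pgMinimal (p : ℕ) (F : Type) [Field F] (n : ℕ)
    (c : PGPoint F n → ZMod p) : Prop :=
  ∀ c' ∈ pgCode p F n, {P : PGPoint F n | c' P ≠ 0} ⊆ {P : PGPoint F n | c P ≠ 0} →
    ∃ α : ZMod p, c' = α • c

/-- The restriction `c restricted to 𝓗 = Σ_{H ∈ 𝓗} α(H)·f_H` of a codeword to a set of hyperplanes,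
given the coefficient function `α`. -/
noncomputable def pgRes (p : ℕ) (F : Type) [Field F] (n : ℕ)
    (α : Submodule F (Fin (n + 1) → F) → ZMod p)
    (A : Finset (Submodule F (Fin (n + 1) → F))) : PGPoint F n → ZMod p :=
  fun P => ∑ H ∈ A, α H * pgInd p F n H P

/-- The graph `Γ_ℙ` associated with a partition `ℙ` of the hyperplane set of `c`:
two distinct parts are adjacent iff some hole of `c` is in the support of the
restrictions of `c` to both parts and of no other part. -/
noncomputable def pgGraph (p : ℕ) (F : Type) [Field F] (n : ℕ)
    (c : PGPoint F n → ZMod p)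
    (α : Submodule F (Fin (n + 1) → F) → ZMod p)
    (P : Finset (Finset (Submodule F (Fin (n + 1) → F)))) :
    SimpleGraph (Finset (Submodule F (Fin (n + 1) → F))) where
  Adj A B := A ∈ P ∧ B ∈ P ∧ A ≠ B ∧ ∃ Q : PGPoint F n,
    c Q = 0 ∧ pgRes p F n α A Q ≠ 0 ∧ pgRes p F n α B Q ≠ 0 ∧
    ∀ C ∈ P, C ≠ A → C ≠ B → pgRes p F n α C Q = 0
  symm := by
    constructor
    rintro A B ⟨hA, hB, hne, Q, h0, h1, h2, h3⟩
    exact ⟨hB, hA, hne.symm, Q, h0, h2, h1, fun C hC hCB hCA => h3 C hC hCA hCB⟩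
  loopless := by
    constructor
    rintro A ⟨-, -, hne, -⟩
    exact hne rfl

/-- One coarsening step: replace a partition by the partition whose parts are the
unions of the parts lying in a common connected component of `Γ_ℙ`. -/
noncomputable def pgNext (p : ℕ) (F : Type) [Field F] (n : ℕ)
    (c : PGPoint F n → ZMod p)
    (α : Submodule F (Fin (n + 1) → F) → ZMod p)
    (P : Finset (Finset (Submodule F (Fin (n + 1) → F)))) :
    Finset (Finset (Submodule F (Fin (n + 1) → F))) :=
  P.image (fun A => (P.filter (fun B => (pgGraph p F n c α P).Reachable A B)).sup id)

/-- The sequence of partitions `ℙ^0, ℙ^1, ℙ^2, …`, starting from the partition of the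
hyperplane set `S` into singletons; it stabilizes at the partition `ℍ_c^∞`. -/
noncomputable def pgSeq (p : ℕ) (F : Type) [Field F] (n : ℕ)
    (c : PGPoint F n → ZMod p)
    (α : Submodule F (Fin (n + 1) → F) → ZMod p)
    (S : Finset (Submodule F (Fin (n + 1) → F))) :
    ℕ → Finset (Finset (Submodule F (Fin (n + 1) → F)))
  | 0 => S.image (fun H => {H})
  | (i + 1) => pgNext p F n c α (pgSeq p F n c α S i)

/-- `P_c^∞`: the set of holes of `c` at which the restriction of `c` to some part of
the stabilized partition is nonzero. -/
noncomputable def pgPinf (p : ℕ) (F : Type) [Field F] (n : ℕ)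
    (c : PGPoint F n → ZMod p)
    (α : Submodule F (Fin (n + 1) → F) → ZMod p)
    (Hinf : Finset (Finset (Submodule F (Fin (n + 1) → F)))) : Set (PGPoint F n) :=
  {Q | c Q = 0 ∧ ∃ A ∈ Hinf, pgRes p F n α A Q ≠ 0}

section MyAux

variable {p : ℕ} {F : Type} [Field F] [Fintype F] {n : ℕ}

lemma my_pgRes_mem_code (α : Submodule F (Fin (n + 1) → F) → ZMod p)
    (A : Finset (Submodule F (Fin (n + 1) → F))) (hdim : ∀ H ∈ A, finrank F H = n) :
    pgRes p F n α A ∈ pgCode p F n := by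
  have hres : pgRes p F n α A = ∑ H ∈ A, α H • pgInd p F n H := by
    funext P
    simp [pgRes, Finset.sum_apply, smul_eq_mul]
  rw [hres]
  exact Submodule.sum_mem _ fun H hH => Submodule.smul_mem _ _
    (Submodule.subset_span ⟨H, hdim H hH, rfl⟩)

/-- Key counting lemma: a linear combination of at most `q` distinct hyperplane
indicators with nonzero coefficients cannot vanish identically. -/
lemma my_pgKey (hn : 2 ≤ n)
    (A : Finset (Submodule F (Fin (n + 1) → F))) (hne : A.Nonempty)
    (hdim : ∀ H ∈ A, finrank F H = n)
    (hcard : A.card ≤ Fintype.card F)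
    (β : Submodule F (Fin (n + 1) → F) → ZMod p)
    (hβ : ∀ H ∈ A, β H ≠ 0)
    (hz : ∀ P : PGPoint F n, ∑ H ∈ A, β H * pgInd p F n H P = 0) : False := by
  obtain ⟨H₀, hH₀⟩ := hne
  set q := Fintype.card F with hq
  have hq2 : 2 ≤ q := Fintype.one_lt_card
  have hcard0 : Fintype.card H₀ = q ^ n := by
    rw [card_eq_pow_finrank (K := F) (V := H₀), hdim H₀ hH₀]
  have hint : ∀ H ∈ A.erase H₀,
      (Finset.univ.filter (fun v : H₀ => (v : Fin (n + 1) → F) ∈ H)).card ≤ q ^ (n - 1) := by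
    intro H hH
    have hHA := Finset.mem_of_mem_erase hH
    have hHne : H ≠ H₀ := Finset.ne_of_mem_erase hH
    have hrk : finrank F (H₀ ⊓ H : Submodule F (Fin (n + 1) → F)) ≤ n - 1 := by
      have hlt : finrank F (H₀ ⊓ H : Submodule F (Fin (n + 1) → F)) < n := by
        by_contra hge
        push_neg at hge
        have he1 : (H₀ ⊓ H : Submodule F (Fin (n + 1) → F)) = H₀ :=
          Submodule.eq_of_le_of_finrank_le inf_le_left (by rw [hdim H₀ hH₀]; exact hge)
        have hle : H₀ ≤ H := by rw [← he1]; exact inf_le_right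
        have : H₀ = H :=
          Submodule.eq_of_le_of_finrank_le hle (by rw [hdim H₀ hH₀, hdim H hHA])
        exact hHne this.symm
      omega
    have hcinf : Fintype.card (H₀ ⊓ H : Submodule F (Fin (n + 1) → F)) ≤ q ^ (n - 1) := by
      rw [card_eq_pow_finrank (K := F) (V := (H₀ ⊓ H : Submodule F (Fin (n + 1) → F)))]
      exact Nat.pow_le_pow_right (by omega) hrk
    calc (Finset.univ.filter (fun v : H₀ => (v : Fin (n + 1) → F) ∈ H)).card
        = Fintype.card {v : H₀ // (v : Fin (n + 1) → F) ∈ H} := (Fintype.card_subtype _).symm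
      _ ≤ Fintype.card (H₀ ⊓ H : Submodule F (Fin (n + 1) → F)) := by
          apply Fintype.card_le_of_injective
            (fun v => ⟨(v.1 : Fin (n + 1) → F), ⟨v.1.2, v.2⟩⟩)
          intro v w hvw
          have h1 : (v.1 : Fin (n + 1) → F) = (w.1 : Fin (n + 1) → F) :=
            congrArg (fun x : (H₀ ⊓ H : Submodule F (Fin (n + 1) → F)) => (x : Fin (n + 1) → F)) hvw
          exact Subtype.ext (Subtype.ext h1)
      _ ≤ q ^ (n - 1) := hcinf
  classical
  set Bad : Finset H₀ := Finset.univ.filter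
      (fun v : H₀ => (v : Fin (n + 1) → F) = 0 ∨ ∃ H ∈ A.erase H₀, (v : Fin (n + 1) → F) ∈ H)
    with hBad
  have hBadsub : Bad ⊆ insert (0 : H₀)
      ((A.erase H₀).biUnion
        (fun H => Finset.univ.filter (fun v : H₀ => (v : Fin (n + 1) → F) ∈ H))) := by
    intro v hv
    rw [hBad, Finset.mem_filter] at hv
    rcases hv.2 with h0 | ⟨H, hH, hvH⟩
    · exact Finset.mem_insert.mpr (Or.inl (Subtype.ext h0))
    · exact Finset.mem_insert.mpr (Or.inr (Finset.mem_biUnion.mpr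
        ⟨H, hH, Finset.mem_filter.mpr ⟨Finset.mem_univ _, hvH⟩⟩))
  have hX2 : 2 ≤ q ^ (n - 1) := le_trans hq2 (Nat.le_self_pow (by omega) q)
  have hBadcard : Bad.card < q ^ n := by
    have h1 : Bad.card ≤ 1 + (A.card - 1) * q ^ (n - 1) := by
      calc Bad.card ≤ _ := Finset.card_le_card hBadsub
        _ ≤ ((A.erase H₀).biUnion
            (fun H => Finset.univ.filter (fun v : H₀ => (v : Fin (n + 1) → F) ∈ H))).card + 1 :=
            Finset.card_insert_le _ _
        _ ≤ (∑ H ∈ A.erase H₀,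
            (Finset.univ.filter (fun v : H₀ => (v : Fin (n + 1) → F) ∈ H)).card) + 1 :=
            Nat.add_le_add_right (Finset.card_biUnion_le) 1
        _ ≤ (∑ _H ∈ A.erase H₀, q ^ (n - 1)) + 1 :=
            Nat.add_le_add_right (Finset.sum_le_sum hint) 1
        _ = (A.card - 1) * q ^ (n - 1) + 1 := by
            rw [Finset.sum_const, smul_eq_mul, Finset.card_erase_of_mem hH₀]
        _ = 1 + (A.card - 1) * q ^ (n - 1) := by ring
    have h2 : (A.card - 1) * q ^ (n - 1) ≤ (q - 1) * q ^ (n - 1) :=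
      Nat.mul_le_mul_right _ (by omega)
    have h3 : (q - 1) * q ^ (n - 1) + q ^ (n - 1) = q ^ n := by
      have : (q - 1) + 1 = q := by omega
      rw [← add_one_mul, this, ← pow_succ']
      congr 1
      omega
    omega
  have hex : ∃ v : H₀, v ∉ Bad := by
    by_contra hall
    push_neg at hall
    have : Finset.univ.card ≤ Bad.card :=
      Finset.card_le_card (fun v _ => hall v)
    rw [Finset.card_univ, hcard0] at this
    omega
  obtain ⟨v, hv⟩ := hex
  rw [hBad, Finset.mem_filter] at hv
  simp only [Finset.mem_univ, true_and] at hv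
  push_neg at hv
  obtain ⟨hv0, hvH⟩ := hv
  have hP1 : finrank F (Submodule.span F {(v : Fin (n + 1) → F)}) = 1 :=
    finrank_span_singleton hv0
  set P : PGPoint F n := ⟨Submodule.span F {(v : Fin (n + 1) → F)}, hP1⟩ with hPdef
  have hsum := hz P
  rw [Finset.sum_eq_single_of_mem H₀ hH₀] at hsum
  · have hle : P.1 ≤ H₀ := (Submodule.span_singleton_le_iff_mem _ _).mpr v.2
    simp only [pgInd, if_pos hle, mul_one] at hsum
    exact hβ H₀ hH₀ hsum
  · intro H hH hHne
    have hnle : ¬ (P.1 ≤ H) := by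
      intro hle
      exact hvH H (Finset.mem_erase.mpr ⟨hHne, hH⟩)
        (hle (Submodule.mem_span_singleton_self _))
    simp [pgInd, hnle]

/-- The invariant: every `pgSeq` stage is a partition of `S` into nonempty parts. -/
lemma my_pgSeq_invariant (p : ℕ) (F : Type) [Field F] (n : ℕ)
    (c : PGPoint F n → ZMod p)
    (α : Submodule F (Fin (n + 1) → F) → ZMod p)
    (S : Finset (Submodule F (Fin (n + 1) → F))) (j : ℕ) :
    (∀ A ∈ pgSeq p F n c α S j, A.Nonempty ∧ A ⊆ S) ∧
    (∀ H ∈ S, ∃ A ∈ pgSeq p F n c α S j, H ∈ A) ∧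
    (∀ A ∈ pgSeq p F n c α S j, ∀ B ∈ pgSeq p F n c α S j, A ≠ B →
      ∀ x, x ∈ A → x ∈ B → False) := by
  induction j with
  | zero =>
    refine ⟨?_, ?_, ?_⟩
    · intro A hA
      obtain ⟨H, hH, rfl⟩ := Finset.mem_image.mp hA
      refine ⟨⟨H, Finset.mem_singleton_self H⟩, ?_⟩
      intro x hx
      rw [Finset.mem_singleton] at hx
      subst hx
      exact hH
    · intro H hH
      exact ⟨{H}, Finset.mem_image_of_mem _ hH, Finset.mem_singleton_self H⟩
    · intro A hA B hB hne x hxA hxB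
      obtain ⟨H, _, rfl⟩ := Finset.mem_image.mp hA
      obtain ⟨H', _, rfl⟩ := Finset.mem_image.mp hB
      rw [Finset.mem_singleton] at hxA hxB
      exact hne (by rw [← hxA, ← hxB])
  | succ j ih =>
    obtain ⟨ih1, ih2, ih3⟩ := ih
    have hseq : pgSeq p F n c α S (j + 1) =
        (pgSeq p F n c α S j).image
          (fun A => ((pgSeq p F n c α S j).filter
            (fun B => (pgGraph p F n c α (pgSeq p F n c α S j)).Reachable A B)).sup id) := rfl
    rw [hseq]
    have hmemf : ∀ A ∈ pgSeq p F n c α S j, A ⊆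
        ((pgSeq p F n c α S j).filter
          (fun B => (pgGraph p F n c α (pgSeq p F n c α S j)).Reachable A B)).sup id := by
      intro A hA x hx
      exact Finset.mem_sup.mpr
        ⟨A, Finset.mem_filter.mpr ⟨hA, SimpleGraph.Reachable.refl A⟩, hx⟩
    refine ⟨?_, ?_, ?_⟩
    · intro A' hA'
      obtain ⟨A, hA, rfl⟩ := Finset.mem_image.mp hA'
      constructor
      · exact ((ih1 A hA).1).mono (hmemf A hA)
      · intro x hx
        obtain ⟨C, hC, hxC⟩ := Finset.mem_sup.mp hx
        exact (ih1 C (Finset.mem_filter.mp hC).1).2 hxC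
    · intro H hH
      obtain ⟨A, hA, hHA⟩ := ih2 H hH
      exact ⟨_, Finset.mem_image_of_mem _ hA, hmemf A hA hHA⟩
    · intro A' hA' B' hB' hne x hxA hxB
      obtain ⟨A, hA, rfl⟩ := Finset.mem_image.mp hA'
      obtain ⟨B, hB, rfl⟩ := Finset.mem_image.mp hB'
      obtain ⟨C, hC, hxC⟩ := Finset.mem_sup.mp hxA
      obtain ⟨D, hD, hxD⟩ := Finset.mem_sup.mp hxB
      obtain ⟨hCT, hrC⟩ := Finset.mem_filter.mp hC
      obtain ⟨hDT, hrD⟩ := Finset.mem_filter.mp hD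
      by_cases hCD : C = D
      · subst hCD
        have hr : (pgGraph p F n c α (pgSeq p F n c α S j)).Reachable A B :=
          hrC.trans hrD.symm
        apply hne
        congr 1
        apply Finset.filter_congr
        intro X _
        exact ⟨fun h' => hr.symm.trans h', fun h' => hr.trans h'⟩
      · exact ih3 C hCT D hDT hCD x hxC hxD

end MyAux

/-- Corollary: if the stabilized partition `ℍ_c^∞` has exactly two parts, then `c`
is not a minimal codeword. -/
theorem statement_12 (p h n : ℕ) (hp : p.Prime) (hh : 2 ≤ h) (hn : 2 ≤ n)
    (hq27 : 27 < p ^ h)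
    (hq1 : 2 < h → max 32 (2 ^ (2 * n - 4)) ≤ p ^ h)
    (hq2 : h = 2 → 2 ^ (2 * n) ≤ p ^ h)
    (F : Type) [Field F] [Fintype F] (hF : Fintype.card F = p ^ h)
    (c : PGPoint F n → ZMod p) (hc : c ∈ pgCode p F n)
    (hwt : (pgWt p F n c : ℤ) ≤ pgW p h n)
    (S : Finset (Submodule F (Fin (n + 1) → F)))
    (hScard : S.card = pgCeil (p ^ h) (pgWt p F n c) ((n : ℤ) - 1))
    (hShyp : ∀ H ∈ S, finrank F H = n)
    (α : Submodule F (Fin (n + 1) → F) → ZMod p)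
    (hα : ∀ H ∈ S, α H ≠ 0)
    (hrep : c = fun P => ∑ H ∈ S, α H * pgInd p F n H P)
    (j : ℕ)
    (hstab : pgSeq p F n c α S (j + 1) = pgSeq p F n c α S j)
    (htwo : (pgSeq p F n c α S j).card = 2) :
    ¬ pgMinimal p F n c := by
  intro hmin
  haveI : Fact p.Prime := ⟨hp⟩
  have hph2 : 2 ≤ p ^ h := by omega
  have hθn : (((n : ℤ) - 1) + 1).toNat = n := by omega
  have hphZ : (0 : ℤ) < ((p ^ h : ℕ) : ℤ) := by exact_mod_cast (by omega : 0 < p ^ h)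
  have hθpos : (0 : ℤ) < pgTheta (p ^ h) ((n : ℤ) - 1) := by
    unfold pgTheta
    rw [hθn]
    apply Finset.sum_pos
    · intro i _
      exact pow_pos hphZ i
    · exact ⟨0, Finset.mem_range.mpr (by omega)⟩
  have hΔle : pgDelta p h (n : ℤ) ≤ ((p ^ h : ℕ) : ℤ) := by
    unfold pgDelta
    split_ifs with h2h
    · have hcast : ((p ^ h : ℕ) : ℝ) = (p : ℝ) ^ h := by push_cast; ring
      have hx : Real.sqrt ((p : ℝ) ^ h) / (2 : ℝ) ^ ((n : ℤ) - 2) ≤ ((p ^ h : ℕ) : ℝ) := by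
        have h1 : (1 : ℝ) ≤ ((p ^ h : ℕ) : ℝ) := by exact_mod_cast (by omega : 1 ≤ p ^ h)
        have hsq : Real.sqrt ((p : ℝ) ^ h) ≤ ((p ^ h : ℕ) : ℝ) := by
          calc Real.sqrt ((p : ℝ) ^ h) = Real.sqrt (((p ^ h : ℕ) : ℝ)) := by rw [hcast]
            _ ≤ Real.sqrt (((p ^ h : ℕ) : ℝ) ^ 2) :=
                Real.sqrt_le_sqrt (le_self_pow₀ h1 (by norm_num))
            _ = ((p ^ h : ℕ) : ℝ) := Real.sqrt_sq (by positivity)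
        have hden : (1 : ℝ) ≤ (2 : ℝ) ^ ((n : ℤ) - 2) := by
          rw [show ((n : ℤ) - 2) = ((n - 2 : ℕ) : ℤ) by omega, zpow_natCast]
          exact one_le_pow₀ (by norm_num)
        calc Real.sqrt ((p : ℝ) ^ h) / (2 : ℝ) ^ ((n : ℤ) - 2)
            ≤ Real.sqrt ((p : ℝ) ^ h) := div_le_self (Real.sqrt_nonneg _) hden
          _ ≤ _ := hsq
      calc ⌊Real.sqrt ((p : ℝ) ^ h) / (2 : ℝ) ^ ((n : ℤ) - 2)⌋
          ≤ ⌊((p ^ h : ℕ) : ℝ)⌋ := Int.floor_le_floor hx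
        _ = ((p ^ h : ℕ) : ℤ) := Int.floor_natCast _
    · have hx : (p : ℝ) / (2 : ℝ) ^ (n : ℤ) ≤ ((p ^ h : ℕ) : ℝ) := by
        have hden : (1 : ℝ) ≤ (2 : ℝ) ^ (n : ℤ) := by
          rw [show ((n : ℤ)) = ((n : ℕ) : ℤ) from rfl, zpow_natCast]
          exact one_le_pow₀ (by norm_num)
        calc (p : ℝ) / (2 : ℝ) ^ (n : ℤ) ≤ (p : ℝ) := div_le_self (by positivity) hden
          _ ≤ ((p ^ h : ℕ) : ℝ) := by exact_mod_cast Nat.le_self_pow (by omega) p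
      calc ⌊(p : ℝ) / (2 : ℝ) ^ (n : ℤ)⌋ ≤ ⌊((p ^ h : ℕ) : ℝ)⌋ := Int.floor_le_floor hx
        _ = ((p ^ h : ℕ) : ℤ) := Int.floor_natCast _
  have hScard_le : S.card ≤ p ^ h := by
    have hceil : (⌈((pgWt p F n c : ℕ) : ℚ) / ((pgTheta (p ^ h) ((n : ℤ) - 1) : ℤ) : ℚ)⌉ : ℤ)
        ≤ pgDelta p h (n : ℤ) - 1 := by
      rw [Int.ceil_le, div_le_iff₀ (by exact_mod_cast hθpos)]
      have hw := hwt
      unfold pgW at hw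
      exact_mod_cast hw
    rw [hScard]
    unfold pgCeil
    refine Int.toNat_le.mpr (le_trans hceil (by omega))
  obtain ⟨inv1, inv2, inv3⟩ := my_pgSeq_invariant p F n c α S j
  obtain ⟨A, B, hAB, hTeq⟩ := Finset.card_eq_two.mp htwo
  have hAT : A ∈ pgSeq p F n c α S j := by rw [hTeq]; exact Finset.mem_insert_self _ _
  have hBT : B ∈ pgSeq p F n c α S j := by
    rw [hTeq]; exact Finset.mem_insert_of_mem (Finset.mem_singleton_self _)
  have hAne := (inv1 A hAT).1
  have hBne := (inv1 B hBT).1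
  have hAS := (inv1 A hAT).2
  have hBS := (inv1 B hBT).2
  have hdisj : ∀ x, x ∈ A → x ∈ B → False := inv3 A hAT B hBT hAB
  have hSun : S = A ∪ B := by
    apply Finset.Subset.antisymm
    · intro H hH
      obtain ⟨C, hC, hHC⟩ := inv2 H hH
      rw [hTeq] at hC
      rcases Finset.mem_insert.mp hC with rfl | hC
      · exact Finset.mem_union_left _ hHC
      · rw [Finset.mem_singleton] at hC; subst hC; exact Finset.mem_union_right _ hHC
    · exact Finset.union_subset hAS hBS
  have hdisjF : Disjoint A B := Finset.disjoint_left.mpr (fun {x} hx hx' => hdisj x hx hx')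
  have hstab' : pgNext p F n c α (pgSeq p F n c α S j) = pgSeq p F n c α S j := by
    rw [show pgSeq p F n c α S (j + 1) = pgNext p F n c α (pgSeq p F n c α S j) from rfl]
      at hstab
    exact hstab
  have hnoadj : ¬ (pgGraph p F n c α (pgSeq p F n c α S j)).Adj A B := by
    intro hadj
    have hr := hadj.reachable
    have hreach2 : ∀ X ∈ pgSeq p F n c α S j, ∀ Y ∈ pgSeq p F n c α S j,
        (pgGraph p F n c α (pgSeq p F n c α S j)).Reachable X Y := by
      intro X hX Y hY
      rw [hTeq] at hX hY
      have hX' : X = A ∨ X = B := by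
        rcases Finset.mem_insert.mp hX with rfl | hX
        · exact Or.inl rfl
        · exact Or.inr (Finset.mem_singleton.mp hX)
      have hY' : Y = A ∨ Y = B := by
        rcases Finset.mem_insert.mp hY with rfl | hY
        · exact Or.inl rfl
        · exact Or.inr (Finset.mem_singleton.mp hY)
      rcases hX' with rfl | rfl
      · rcases hY' with rfl | rfl
        · exact SimpleGraph.Reachable.refl _
        · exact hr
      · rcases hY' with rfl | rfl
        · exact hr.symm
        · exact SimpleGraph.Reachable.refl _
    have hcard1 : (pgSeq p F n c α S j).card ≤ 1 := by
      rw [← hstab']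
      apply Finset.card_le_one.mpr
      intro a ha b hb
      unfold pgNext at ha hb
      obtain ⟨X, hX, rfl⟩ := Finset.mem_image.mp ha
      obtain ⟨Y, hY, rfl⟩ := Finset.mem_image.mp hb
      have hXY := hreach2 X hX Y hY
      congr 1
      ext C
      simp only [Finset.mem_filter]
      exact ⟨fun hh => ⟨hh.1, hXY.symm.trans hh.2⟩, fun hh => ⟨hh.1, hXY.trans hh.2⟩⟩
    omega
  have hhole : ∀ Q : PGPoint F n, c Q = 0 →
      pgRes p F n α A Q ≠ 0 → pgRes p F n α B Q ≠ 0 → False := by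
    intro Q h0 h1 h2
    apply hnoadj
    refine ⟨hAT, hBT, hAB, Q, h0, h1, h2, ?_⟩
    intro C hC hCA hCB
    rw [hTeq] at hC
    rcases Finset.mem_insert.mp hC with rfl | hC
    · exact absurd rfl hCA
    · rw [Finset.mem_singleton] at hC; exact absurd hC hCB
  have hsum : ∀ Q : PGPoint F n, c Q = pgRes p F n α A Q + pgRes p F n α B Q := by
    intro Q
    have hQ : c Q = ∑ H ∈ S, α H * pgInd p F n H Q := congrFun hrep Q
    rw [hQ, hSun, Finset.sum_union hdisjF]
    rfl
  have hsupp : {Q : PGPoint F n | pgRes p F n α A Q ≠ 0} ⊆ {Q : PGPoint F n | c Q ≠ 0} := by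
    intro Q hQ
    simp only [Set.mem_setOf_eq] at hQ ⊢
    intro hcQ
    apply hhole Q hcQ hQ
    intro h2
    have hh := hsum Q
    rw [hcQ, h2, add_zero] at hh
    exact hQ hh.symm
  obtain ⟨α₀, hα₀⟩ := hmin (pgRes p F n α A)
    (my_pgRes_mem_code α A (fun H hH => hShyp H (hAS hH))) hsupp
  have key : ∀ D : Finset (Submodule F (Fin (n + 1) → F)), D.Nonempty → D ⊆ S →
      ∀ β : Submodule F (Fin (n + 1) → F) → ZMod p, (∀ H ∈ D, β H ≠ 0) →
      (∀ Q : PGPoint F n, ∑ H ∈ D, β H * pgInd p F n H Q = 0) → False := by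
    intro D hDne hDS β hβ hzz
    refine my_pgKey hn D hDne (fun H hH => hShyp H (hDS hH)) ?_ β hβ hzz
    rw [hF]
    exact le_trans (Finset.card_le_card hDS) hScard_le
  have hresA : ∀ Q : PGPoint F n, pgRes p F n α A Q = α₀ * c Q := by
    intro Q; rw [hα₀]; rfl
  by_cases h0 : α₀ = 0
  · refine key A hAne hAS α (fun H hH => hα H (hAS hH)) ?_
    intro Q
    have hh := hresA Q
    rw [h0, zero_mul] at hh
    exact hh
  · by_cases h1 : α₀ = 1
    · refine key B hBne hBS α (fun H hH => hα H (hBS hH)) ?_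
      intro Q
      have hh := hsum Q
      rw [hresA Q, h1, one_mul] at hh
      exact left_eq_add.mp hh
    · set β : Submodule F (Fin (n + 1) → F) → ZMod p :=
        fun H => if H ∈ A then (1 - α₀⁻¹) * α H else α H with hβdef
      have hγ : (1 - α₀⁻¹ : ZMod p) ≠ 0 := by
        intro e
        apply h1
        have hinv1 : (α₀⁻¹ : ZMod p) = 1 := (sub_eq_zero.mp e).symm
        calc α₀ = (α₀⁻¹)⁻¹ := (inv_inv α₀).symm
          _ = 1 := by rw [hinv1, inv_one]
      have hβne : ∀ H ∈ S, β H ≠ 0 := by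
        intro H hH
        rw [hβdef]
        by_cases hHA : H ∈ A
        · simp only [if_pos hHA]
          exact mul_ne_zero hγ (hα H hH)
        · simp only [if_neg hHA]
          exact hα H hH
      refine key S ⟨hAne.choose, hAS hAne.choose_spec⟩ subset_rfl β hβne ?_
      intro Q
      have e1 : ∑ H ∈ S, β H * pgInd p F n H Q
          = (∑ H ∈ A, β H * pgInd p F n H Q) + ∑ H ∈ B, β H * pgInd p F n H Q := by
        rw [hSun, Finset.sum_union hdisjF]
      rw [e1]
      have e2 : ∑ H ∈ A, β H * pgInd p F n H Q = (1 - α₀⁻¹) * pgRes p F n α A Q := by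
        show _ = (1 - α₀⁻¹) * ∑ H ∈ A, α H * pgInd p F n H Q
        rw [Finset.mul_sum]
        apply Finset.sum_congr rfl
        intro H hH
        rw [hβdef]
        simp only [if_pos hH]
        ring
      have e3 : ∑ H ∈ B, β H * pgInd p F n H Q = pgRes p F n α B Q := by
        apply Finset.sum_congr rfl
        intro H hH
        rw [hβdef]
        simp only [if_neg (fun hHA => hdisj H hHA hH)]
      rw [e2, e3]
      have hB' : pgRes p F n α B Q = c Q - pgRes p F n α A Q := by
        rw [hsum Q]; ring
      rw [hB', hresA Q]
      have hinv : (α₀⁻¹ : ZMod p) * α₀ = 1 := inv_mul_cancel₀ h0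
      have expand : (1 - α₀⁻¹) * (α₀ * c Q) + (c Q - α₀ * c Q)
          = (1 - α₀⁻¹ * α₀) * c Q := by ring
      rw [expand, hinv, sub_self, zero_mul]
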